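/- Let σ be a fully bounded cuttable 2-permutation of degree n, let i ∈ {1,…,n}, and let p < q be the two positions with σ(p) = σ(q) = i. Then there are no positions s, t with p < s < t < q such that σ(s) > i and σ(t) < i; in other words, the factor of σ strictly between the two occurrences of i is a concatenation μ·ν in which every letter of μ is smaller than i and every letter of ν is larger than i. -/

import Mathlib

/-- `σ` is a `k`-permutation of degree `n`: a word over the alphabet `{1, …, n}`
in which every value `i ∈ {1, …, n}` occurs exactly `k` times (and no other
letter occurs). -/
def IsMultiPerm (k n : ℕ) (σ : List ℕ) : Prop :=
  ∀ i : ℕ, σ.count i = if 1 ≤ i ∧ i ≤ n then k else 0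

/-- The restriction `σ^{|L}` of a multipermutation `σ` to a set `L` of values:
delete all letters whose value is not in `L`, and replace, for each `x`, the
`x`-th smallest element of `L` by `x`. -/
def restrict (σ : List ℕ) (L : Finset ℕ) : List ℕ :=
  (σ.filter fun x => decide (x ∈ L)).map fun x => (L.filter fun y => y ≤ x).card

/-- `γ` is a bounded cut of the `2`-permutation `σ` of degree `n`:
`1 ≤ γ ≤ n - 1` and `σ = f·μ·ν·l` where `f` and `l` are the first and last
letters of `σ` and `μ`, `ν` are words such that every letter of `μ` is at most
`γ` and every letter of `ν` is greater than `γ`. -/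
def IsBoundedCut (n : ℕ) (σ : List ℕ) (γ : ℕ) : Prop :=
  1 ≤ γ ∧ γ ≤ n - 1 ∧
    ∃ (f l : ℕ) (μ ν : List ℕ),
      σ = f :: (μ ++ ν ++ [l]) ∧ (∀ x ∈ μ, x ≤ γ) ∧ (∀ x ∈ ν, γ < x)

/-- A `2`-permutation of degree `n` is bounded cuttable if it has a bounded cut. -/
def BoundedCuttable (n : ℕ) (σ : List ℕ) : Prop :=
  ∃ γ, IsBoundedCut n σ γ

/-- A `2`-permutation of degree `n` is fully bounded cuttable if its restriction
to every interval `{a, …, b} ⊆ {1, …, n}` with `a < b` is bounded cuttable. -/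
def FullyBoundedCuttable (n : ℕ) (σ : List ℕ) : Prop :=
  ∀ a b : ℕ, 1 ≤ a → a < b → b ≤ n →
    BoundedCuttable (Finset.Icc a b).card (restrict σ (Finset.Icc a b))

/-- Let `σ` be a fully bounded cuttable `2`-permutation of degree `n`, let
`i ∈ {1, …, n}`, and let `p < q` be the two positions with
`σ(p) = σ(q) = i`. Then there are no positions `s, t` with `p < s < t < q`,
`σ(s) > i` and `σ(t) < i`: the factor of `σ` strictly between the two
occurrences of `i` is a concatenation `μ·ν` with every letter of `μ` smaller
than `i` and every letter of `ν` larger than `i`. -/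
theorem fullyBoundedCuttable_between_occurrences (n : ℕ) (hn : 1 ≤ n)
    (σ : List ℕ) (hσ : IsMultiPerm 2 n σ) (hfull : FullyBoundedCuttable n σ)
    (i : ℕ) (hi₁ : 1 ≤ i) (hi₂ : i ≤ n)
    (p q : Fin σ.length) (hpq : p < q) (hp : σ.get p = i) (hq : σ.get q = i) :
    ¬ ∃ s t : Fin σ.length,
        p < s ∧ s < t ∧ t < q ∧ i < σ.get s ∧ σ.get t < i := by
  rintro ⟨s, t, hps, hst, htq, hsv, htv⟩
  simp only [List.get_eq_getElem] at hp hq hsv htv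
  have hmem : ∀ x ∈ σ, 1 ≤ x ∧ x ≤ n := by
    intro x hx
    have h := hσ x
    by_contra hc
    rw [if_neg hc] at h
    have := List.count_pos_iff.mpr hx
    omega
  set j : ℕ := σ[(↑s : ℕ)]'s.isLt with hjdef
  set k : ℕ := σ[(↑t : ℕ)]'t.isLt with hkdef
  obtain ⟨hj1, hjn⟩ := hmem j (List.getElem_mem s.isLt)
  obtain ⟨hk1, hkn⟩ := hmem k (List.getElem_mem t.isLt)
  have hkj : k < j := lt_trans htv hsv
  have hiL : i ∈ Finset.Icc k j := Finset.mem_Icc.mpr ⟨le_of_lt htv, le_of_lt hsv⟩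
  have hjL : j ∈ Finset.Icc k j := Finset.mem_Icc.mpr ⟨le_of_lt hkj, le_refl j⟩
  have hkL : k ∈ Finset.Icc k j := Finset.mem_Icc.mpr ⟨le_refl k, le_of_lt hkj⟩
  have hN : (Finset.Icc k j).card = j + 1 - k := Nat.card_Icc k j
  obtain ⟨γ, hγ1, hγ2, f, lst, μ, ν, hdec, hμ, hν⟩ := hfull k j hk1 hkj hjn
  -- values of the relabeling map
  have hgj : ((Finset.Icc k j).filter fun y => y ≤ j).card = (Finset.Icc k j).card := by
    rw [Finset.filter_true_of_mem (fun y hy => (Finset.mem_Icc.mp hy).2)]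
  have hgk : ((Finset.Icc k j).filter fun y => y ≤ k).card = 1 := by
    have h : ((Finset.Icc k j).filter fun y => y ≤ k) = {k} := by
      ext y
      simp only [Finset.mem_filter, Finset.mem_Icc, Finset.mem_singleton]
      omega
    rw [h, Finset.card_singleton]
  -- decompose σ around positions s and t
  have hsplit : σ = σ.take ↑s ++ j ::
      (((σ.drop (↑s+1)).take (↑t - (↑s+1))) ++ k :: σ.drop (↑t+1)) := by
    have h2 : σ.drop ↑s = j :: σ.drop (↑s+1) := List.drop_eq_getElem_cons s.isLt
    have h4 : σ.drop ↑t = k :: σ.drop (↑t+1) := List.drop_eq_getElem_cons t.isLt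
    have h3 : σ.drop (↑s+1) = (σ.drop (↑s+1)).take (↑t - (↑s+1)) ++ σ.drop ↑t := by
      conv_lhs => rw [← List.take_append_drop (↑t - (↑s+1)) (σ.drop (↑s+1))]
      rw [List.drop_drop]
      congr 2
      have : (↑s : ℕ) + 1 ≤ ↑t := hst
      omega
    conv_lhs => rw [← List.take_append_drop (↑s) σ, h2, h3, h4]
  -- i occurs before s and after t
  have hiA : i ∈ σ.take ↑s := by
    have hps' : (↑p : ℕ) < (↑s : ℕ) := hps
    have hp' : (↑p : ℕ) < (σ.take ↑s).length := by
      simp only [List.length_take]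
      omega
    have h := List.getElem_mem hp'
    rwa [List.getElem_take, hp] at h
  have hiD : i ∈ σ.drop (↑t+1) := by
    have htq' : (↑t : ℕ) < (↑q : ℕ) := htq
    have hq' : (↑q : ℕ) - (↑t+1) < (σ.drop (↑t+1)).length := by
      simp only [List.length_drop]
      omega
    have h := List.getElem_mem hq'
    have he : (σ.drop (↑t+1))[(↑q : ℕ) - (↑t+1)]'hq' = σ[(↑q : ℕ)]'q.isLt := by
      rw [List.getElem_drop]
      congr 1
      omega
    rwa [he, hq] at h
  -- the filtered word
  have hfil : σ.filter (fun x => decide (x ∈ Finset.Icc k j)) =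
      (σ.take ↑s).filter (fun x => decide (x ∈ Finset.Icc k j)) ++ j ::
      (((σ.drop (↑s+1)).take (↑t - (↑s+1))).filter (fun x => decide (x ∈ Finset.Icc k j)) ++
        k :: (σ.drop (↑t+1)).filter (fun x => decide (x ∈ Finset.Icc k j))) := by
    conv_lhs => rw [hsplit]
    simp [List.filter_append, List.filter_cons, hjL, hkL, le_of_lt hkj]
  have hres : restrict σ (Finset.Icc k j) =
      ((σ.take ↑s).filter (fun x => decide (x ∈ Finset.Icc k j))).map
          (fun x => ((Finset.Icc k j).filter fun y => y ≤ x).card) ++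
        (Finset.Icc k j).card ::
      ((((σ.drop (↑s+1)).take (↑t - (↑s+1))).filter (fun x => decide (x ∈ Finset.Icc k j))).map
          (fun x => ((Finset.Icc k j).filter fun y => y ≤ x).card) ++
        1 :: ((σ.drop (↑t+1)).filter (fun x => decide (x ∈ Finset.Icc k j))).map
          (fun x => ((Finset.Icc k j).filter fun y => y ≤ x).card)) := by
    unfold restrict
    rw [hfil]
    simp [hgj, hgk]
  -- the first and last blocks are nonempty
  have hAne : ((σ.take ↑s).filter (fun x => decide (x ∈ Finset.Icc k j))).map
      (fun x => ((Finset.Icc k j).filter fun y => y ≤ x).card) ≠ [] :=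
    List.ne_nil_of_mem (List.mem_map_of_mem (List.mem_filter.mpr ⟨hiA, by simp [hiL]⟩))
  have hDne : ((σ.drop (↑t+1)).filter (fun x => decide (x ∈ Finset.Icc k j))).map
      (fun x => ((Finset.Icc k j).filter fun y => y ≤ x).card) ≠ [] :=
    List.ne_nil_of_mem (List.mem_map_of_mem (List.mem_filter.mpr ⟨hiD, by simp [hiL]⟩))
  obtain ⟨a, A₂, hA2⟩ := List.exists_cons_of_ne_nil hAne
  obtain ⟨W₂, e, hW2⟩ := (List.eq_nil_or_concat _).resolve_left hDne
  rw [hres, hA2, hW2] at hdec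
  -- peel off the first and last letters
  have h1 : A₂ ++ (Finset.Icc k j).card ::
      ((((σ.drop (↑s+1)).take (↑t - (↑s+1))).filter (fun x => decide (x ∈ Finset.Icc k j))).map
          (fun x => ((Finset.Icc k j).filter fun y => y ≤ x).card) ++
        1 :: (W₂ ++ [e])) = μ ++ (ν ++ [lst]) := by
    have := hdec
    simp only [List.cons_append, List.append_assoc, List.cons.injEq] at this
    simpa [List.append_assoc] using this.2
  have h2 : (A₂ ++ (Finset.Icc k j).card ::
      ((((σ.drop (↑s+1)).take (↑t - (↑s+1))).filter (fun x => decide (x ∈ Finset.Icc k j))).map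
          (fun x => ((Finset.Icc k j).filter fun y => y ≤ x).card) ++
        1 :: W₂)) ++ [e] = (μ ++ ν) ++ [lst] := by
    simpa [List.append_assoc] using h1
  have hmain : A₂ ++ (Finset.Icc k j).card ::
      ((((σ.drop (↑s+1)).take (↑t - (↑s+1))).filter (fun x => decide (x ∈ Finset.Icc k j))).map
          (fun x => ((Finset.Icc k j).filter fun y => y ≤ x).card) ++
        1 :: W₂) = μ ++ ν :=
    List.append_inj_left' h2 rfl
  -- the pattern [card, 1] is a sublist of μ ++ ν
  have hsub : List.Sublist [(Finset.Icc k j).card, 1] (μ ++ ν) := by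
    rw [← hmain]
    have hs1 : List.Sublist [(Finset.Icc k j).card] (A₂ ++ (Finset.Icc k j).card ::
        (((σ.drop (↑s+1)).take (↑t - (↑s+1))).filter (fun x => decide (x ∈ Finset.Icc k j))).map
          (fun x => ((Finset.Icc k j).filter fun y => y ≤ x).card)) :=
      List.singleton_sublist.mpr (by simp)
    have hs2 : List.Sublist [1] (1 :: W₂) := List.singleton_sublist.mpr (by simp)
    have := hs1.append hs2
    simpa [List.append_assoc] using this
  -- derive the contradiction
  have hNγ : γ < (Finset.Icc k j).card := by omega
  obtain ⟨l₁, l₂, heq, hl₁, hl₂⟩ := List.sublist_append_iff.mp hsub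
  match l₁, heq, hl₁ with
  | [], heq, hl₁ =>
    have hx : l₂ = [(Finset.Icc k j).card, 1] := by simpa using heq.symm
    have h1ν : (1:ℕ) ∈ ν := hl₂.subset (by rw [hx]; simp)
    have := hν 1 h1ν
    omega
  | [x], heq, hl₁ =>
    obtain ⟨hx1, hx2⟩ : x = (Finset.Icc k j).card ∧ l₂ = [1] := by
      simpa using heq.symm
    have h1ν : (1:ℕ) ∈ ν := hl₂.subset (by rw [hx2]; simp)
    have := hν 1 h1ν
    omega
  | x :: y :: l₁', heq, hl₁ =>
    have hx : x = (Finset.Icc k j).card := by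
      have h := heq
      simp only [List.cons_append, List.cons.injEq] at h
      exact h.1.symm
    have hcμ : (Finset.Icc k j).card ∈ μ := hl₁.subset (by rw [← hx]; simp)
    have := hμ _ hcμ
    omega
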